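/- There exists a constant c_d > 0 depending only on the dimension d with the following property. Let E ∈ ℝ, ε > 0, γ > 0 with 2·c_d·γ ≤ ε, let u ∈ [−1,1]^Λ, and let Λ' ⊆ Λ be a set of positions such that every x ∈ Λ' satisfies both |√(u_x²+1) − E| ≥ ε and |√(u_x²+1) + E| ≥ ε; set R = Λ ∖ Λ'. Let D be the restriction of H(u) to the sites Λ' × {1,2} and let C be the block of H(u) with rows indexed by Λ' × {1,2} and columns by R × {1,2}. Then for every λ ∈ ℝ with |λ − E| ≤ ε/2, every position x ∈ Λ', and every position y ∈ R, the 2×2 block of (D − λ·I)⁻¹C between x and y has operator norm at most (c_d·γ/ε)^{max(|x−y|, 1)}. -/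

import Mathlib

open Matrix

/-- The ℓ¹ distance `|x-y| = Σᵢ |xᵢ-yᵢ|` on `ℤ^d`, as a natural number. -/
def dist1 {d : ℕ} (x y : Fin d → ℤ) : ℕ := ∑ i, (x i - y i).natAbs

/-- The random block Hamiltonian: diagonal 2×2 block `[[u_x,1],[1,-u_x]]` at each
position `x ∈ Λ`, and block `γ·I₂` between nearest-neighbor positions. -/
noncomputable def Ham (d : ℕ) (γ : ℝ) (Λ : Finset (Fin d → ℤ)) (u : {x // x ∈ Λ} → ℝ) :
    Matrix ({x // x ∈ Λ} × Fin 2) ({x // x ∈ Λ} × Fin 2) ℝ := fun s t =>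
  if s.1 = t.1 then
    (if s.2 = t.2 then (if s.2 = 0 then u s.1 else -u s.1) else 1)
  else if dist1 (s.1 : Fin d → ℤ) (t.1 : Fin d → ℤ) = 1 then
    (if s.2 = t.2 then γ else 0)
  else 0

/-- The operator norm of a real matrix acting between Euclidean spaces. -/
noncomputable def opNorm {m n : Type*} [Fintype m] [Fintype n] [DecidableEq n]
    (M : Matrix m n ℝ) : ℝ :=
  ‖LinearMap.toContinuousLinearMap (Matrix.toEuclideanLin M)‖

/-- The 2×2 block of a site-indexed matrix between positions `x` and `y`. -/
def blk {α β : Type*} (M : Matrix (α × Fin 2) (β × Fin 2) ℝ) (x : α) (y : β) :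
    Matrix (Fin 2) (Fin 2) ℝ := fun i j => M (x, i) (y, j)

/-- Restriction `D` of `H(u)` to the sites over `Λ' ⊆ Λ`. -/
noncomputable def Dmat (d : ℕ) (γ : ℝ) (Λ Λ' : Finset (Fin d → ℤ)) (hsub : Λ' ⊆ Λ)
    (u : {x // x ∈ Λ} → ℝ) :
    Matrix ({x // x ∈ Λ'} × Fin 2) ({x // x ∈ Λ'} × Fin 2) ℝ :=
  (Ham d γ Λ u).submatrix
    (fun s => ((⟨s.1.1, hsub s.1.2⟩ : {x // x ∈ Λ}), s.2))
    (fun s => ((⟨s.1.1, hsub s.1.2⟩ : {x // x ∈ Λ}), s.2))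

/-- The block `C` of `H(u)` with rows indexed by the sites over `Λ'` and columns by
the sites over `R = Λ \ Λ'`. -/
noncomputable def Cmat (d : ℕ) (γ : ℝ) (Λ Λ' : Finset (Fin d → ℤ)) (hsub : Λ' ⊆ Λ)
    (u : {x // x ∈ Λ} → ℝ) :
    Matrix ({x // x ∈ Λ'} × Fin 2) ({x // x ∈ Λ \ Λ'} × Fin 2) ℝ :=
  (Ham d γ Λ u).submatrix
    (fun s => ((⟨s.1.1, hsub s.1.2⟩ : {x // x ∈ Λ}), s.2))
    (fun s => ((⟨s.1.1, (Finset.mem_sdiff.mp s.1.2).1⟩ : {x // x ∈ Λ}), s.2))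


set_option linter.unusedSectionVars false
set_option linter.unusedVariables false

section OpAux
variable {m n p : Type*} [Fintype m] [Fintype n] [Fintype p] [DecidableEq n] [DecidableEq p]

lemma opNorm_nonneg (M : Matrix m n ℝ) : 0 ≤ opNorm M := norm_nonneg _

lemma toEuclideanLin_apply' (M : Matrix m n ℝ) (v : EuclideanSpace ℝ n) (i : m) :
    Matrix.toEuclideanLin M v i = ∑ j, M i j * v j := by
  simp [Matrix.toEuclideanLin_apply, Matrix.mulVec, dotProduct]

lemma opNorm_le_bound (M : Matrix m n ℝ) {c : ℝ} (hc : 0 ≤ c)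
    (h : ∀ v : EuclideanSpace ℝ n, ‖Matrix.toEuclideanLin M v‖ ≤ c * ‖v‖) : opNorm M ≤ c :=
  ContinuousLinearMap.opNorm_le_bound _ hc (fun v => by simpa using h v)

lemma le_opNorm (M : Matrix m n ℝ) (v : EuclideanSpace ℝ n) :
    ‖Matrix.toEuclideanLin M v‖ ≤ opNorm M * ‖v‖ := by
  simpa [opNorm] using (LinearMap.toContinuousLinearMap (Matrix.toEuclideanLin M)).le_opNorm v

lemma toEuclideanLin_mul (M : Matrix m n ℝ) (N : Matrix n p ℝ) (v : EuclideanSpace ℝ p) :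
    Matrix.toEuclideanLin (M * N) v = Matrix.toEuclideanLin M (Matrix.toEuclideanLin N v) := by
  ext i
  simp only [toEuclideanLin_apply', Matrix.mul_apply, Finset.sum_mul, Finset.mul_sum]
  rw [Finset.sum_comm]
  simp [mul_assoc]

lemma opNorm_mul_le (M : Matrix m n ℝ) (N : Matrix n p ℝ) :
    opNorm (M * N) ≤ opNorm M * opNorm N := by
  apply opNorm_le_bound _ (mul_nonneg (opNorm_nonneg M) (opNorm_nonneg N))
  intro v
  rw [toEuclideanLin_mul]
  calc ‖Matrix.toEuclideanLin M (Matrix.toEuclideanLin N v)‖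
      ≤ opNorm M * ‖Matrix.toEuclideanLin N v‖ := le_opNorm _ _
    _ ≤ opNorm M * (opNorm N * ‖v‖) := by
        exact mul_le_mul_of_nonneg_left (le_opNorm _ _) (opNorm_nonneg M)
    _ = opNorm M * opNorm N * ‖v‖ := by ring

lemma opNorm_sum_le {κ : Type*} (s : Finset κ) (f : κ → Matrix m n ℝ) :
    opNorm (∑ k ∈ s, f k) ≤ ∑ k ∈ s, opNorm (f k) := by
  unfold opNorm
  rw [map_sum, map_sum]
  exact norm_sum_le _ _

lemma opNorm_one_le : opNorm (1 : Matrix n n ℝ) ≤ 1 := by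
  apply opNorm_le_bound _ zero_le_one
  intro v
  have : Matrix.toEuclideanLin (1 : Matrix n n ℝ) v = v := by
    ext i; simp [toEuclideanLin_apply', Matrix.one_apply]
  rw [this, one_mul]

lemma opNorm_zero : opNorm (0 : Matrix m n ℝ) = 0 := by
  unfold opNorm; rw [map_zero, map_zero, norm_zero]

lemma opNorm_smul (a : ℝ) (M : Matrix m n ℝ) : opNorm (a • M) = |a| * opNorm M := by
  unfold opNorm; rw [LinearEquiv.map_smul, LinearEquiv.map_smul, norm_smul, Real.norm_eq_abs]

lemma opNorm_neg (M : Matrix m n ℝ) : opNorm (-M) = opNorm M := by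
  unfold opNorm; rw [map_neg, map_neg, norm_neg]

lemma abs_coord_le_norm (w : EuclideanSpace ℝ m) (i : m) : |w i| ≤ ‖w‖ := by
  rw [EuclideanSpace.norm_eq]
  have h : |w i| ^ 2 ≤ ∑ j, ‖w j‖ ^ 2 := by
    have := Finset.single_le_sum (f := fun j => ‖w j‖ ^ 2)
      (fun j _ => sq_nonneg _) (Finset.mem_univ i)
    simpa [Real.norm_eq_abs, sq_abs] using this
  calc |w i| = Real.sqrt (|w i| ^ 2) := (Real.sqrt_sq (abs_nonneg _)).symm
    _ ≤ Real.sqrt (∑ j, ‖w j‖ ^ 2) := Real.sqrt_le_sqrt h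

lemma norm_le_sum_abs (w : EuclideanSpace ℝ m) : ‖w‖ ≤ ∑ i, |w i| := by
  rw [EuclideanSpace.norm_eq]
  have h : ∑ i, ‖w i‖ ^ 2 ≤ (∑ i, |w i|) ^ 2 := by
    have := Finset.sum_sq_le_sq_sum_of_nonneg (s := Finset.univ)
      (f := fun i => |w i|) (fun i _ => abs_nonneg _)
    simpa [Real.norm_eq_abs, sq_abs] using this
  calc Real.sqrt (∑ i, ‖w i‖ ^ 2) ≤ Real.sqrt ((∑ i, |w i|) ^ 2) := Real.sqrt_le_sqrt h
    _ = ∑ i, |w i| := Real.sqrt_sq (Finset.sum_nonneg fun i _ => abs_nonneg _)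

lemma abs_entry_le_opNorm (M : Matrix m n ℝ) (i : m) (j : n) : |M i j| ≤ opNorm M := by
  have h1 : Matrix.toEuclideanLin M (EuclideanSpace.single j (1:ℝ)) i = M i j := by
    rw [toEuclideanLin_apply']
    simp [EuclideanSpace.single_apply]
  have h2 := le_opNorm M (EuclideanSpace.single j (1:ℝ))
  rw [EuclideanSpace.norm_single] at h2
  calc |M i j| = |Matrix.toEuclideanLin M (EuclideanSpace.single j (1:ℝ)) i| := by rw [h1]
    _ ≤ ‖Matrix.toEuclideanLin M (EuclideanSpace.single j (1:ℝ))‖ := abs_coord_le_norm _ _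
    _ ≤ opNorm M * ‖(1:ℝ)‖ := h2
    _ = opNorm M := by simp

lemma opNorm_le_sum_abs (M : Matrix m n ℝ) : opNorm M ≤ ∑ i, ∑ j, |M i j| := by
  apply opNorm_le_bound _ (Finset.sum_nonneg fun i _ => Finset.sum_nonneg fun j _ => abs_nonneg _)
  intro v
  calc ‖Matrix.toEuclideanLin M v‖ ≤ ∑ i, |Matrix.toEuclideanLin M v i| := norm_le_sum_abs _
    _ ≤ ∑ i, ∑ j, |M i j| * ‖v‖ := by
        apply Finset.sum_le_sum; intro i _
        rw [toEuclideanLin_apply']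
        calc |∑ j, M i j * v j| ≤ ∑ j, |M i j * v j| := Finset.abs_sum_le_sum_abs _ _
          _ ≤ ∑ j, |M i j| * ‖v‖ := by
              apply Finset.sum_le_sum; intro j _
              rw [abs_mul]
              exact mul_le_mul_of_nonneg_left (abs_coord_le_norm v j) (abs_nonneg _)
    _ = (∑ i, ∑ j, |M i j|) * ‖v‖ := by rw [Finset.sum_mul]; congr 1; funext i; rw [Finset.sum_mul]

end OpAux

section BlkAux
variable {α β χ : Type*} [Fintype α] [Fintype β] [Fintype χ] [DecidableEq α] [DecidableEq β] [DecidableEq χ]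

/-- block-diagonal matrix from a family of 2×2 blocks -/
def bd (f : α → Matrix (Fin 2) (Fin 2) ℝ) : Matrix (α × Fin 2) (α × Fin 2) ℝ :=
  fun s t => if s.1 = t.1 then f s.1 s.2 t.2 else 0

lemma blk_bd (f : α → Matrix (Fin 2) (Fin 2) ℝ) (x y : α) :
    blk (bd f) x y = if x = y then f x else 0 := by
  ext i j; by_cases h : x = y <;> simp [blk, bd, h]

lemma blk_mul (M : Matrix (α × Fin 2) (β × Fin 2) ℝ) (N : Matrix (β × Fin 2) (χ × Fin 2) ℝ)
    (x : α) (z : χ) : blk (M * N) x z = ∑ y : β, blk M x y * blk N y z := by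
  ext i j
  simp only [blk, Matrix.mul_apply, Matrix.sum_apply, Fintype.sum_prod_type]

lemma blk_add (M N : Matrix (α × Fin 2) (β × Fin 2) ℝ) (x : α) (y : β) :
    blk (M + N) x y = blk M x y + blk N x y := rfl

lemma blk_neg (M : Matrix (α × Fin 2) (β × Fin 2) ℝ) (x : α) (y : β) :
    blk (-M) x y = -(blk M x y) := rfl

lemma blk_sub (M N : Matrix (α × Fin 2) (β × Fin 2) ℝ) (x : α) (y : β) :
    blk (M - N) x y = blk M x y - blk N x y := rfl

lemma blk_sum {κ : Type*} (s : Finset κ) (f : κ → Matrix (α × Fin 2) (β × Fin 2) ℝ) (x : α) (y : β) :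
    blk (∑ k ∈ s, f k) x y = ∑ k ∈ s, blk (f k) x y := by
  ext i j; simp [blk, Matrix.sum_apply]

lemma blk_one (x y : α) :
    blk (1 : Matrix (α × Fin 2) (α × Fin 2) ℝ) x y = if x = y then 1 else 0 := by
  ext i j
  by_cases h : x = y <;>
    simp [blk, Matrix.one_apply, Prod.ext_iff, h]

lemma bd_mul_bd (f g : α → Matrix (Fin 2) (Fin 2) ℝ) :
    bd f * bd g = bd (fun x => f x * g x) := by
  ext ⟨x, i⟩ ⟨y, j⟩
  simp only [Matrix.mul_apply, bd, Fintype.sum_prod_type]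
  by_cases h : x = y
  · subst h
    simp [Matrix.mul_apply]
  · simp only [h, if_false]
    apply Finset.sum_eq_zero
    intro z _
    by_cases hz : x = z
    · subst hz; simp [h]
    · simp [hz]

lemma bd_one : bd (fun _ : α => (1 : Matrix (Fin 2) (Fin 2) ℝ)) = 1 := by
  ext ⟨x, i⟩ ⟨y, j⟩
  by_cases h : x = y
  · subst h; simp [bd, Matrix.one_apply, Prod.ext_iff]
  · simp [bd, Matrix.one_apply, Prod.ext_iff, h]

lemma blk_mul_bd (M : Matrix (α × Fin 2) (β × Fin 2) ℝ) (f : β → Matrix (Fin 2) (Fin 2) ℝ)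
    (x : α) (y : β) : blk (M * bd f) x y = blk M x y * f y := by
  rw [blk_mul]
  rw [Finset.sum_eq_single y]
  · rw [blk_bd]; simp
  · intro z _ hz; rw [blk_bd, if_neg hz, mul_zero]
  · intro h; exact absurd (Finset.mem_univ y) h

lemma blk_bd_mul (M : Matrix (α × Fin 2) (β × Fin 2) ℝ) (f : α → Matrix (Fin 2) (Fin 2) ℝ)
    (x : α) (y : β) : blk (bd f * M) x y = f x * blk M x y := by
  rw [blk_mul]
  rw [Finset.sum_eq_single x]
  · rw [blk_bd]; simp
  · intro z _ hz; rw [blk_bd, if_neg (Ne.symm hz), zero_mul]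
  · intro h; exact absurd (Finset.mem_univ x) h

lemma blk_smul (a : ℝ) (M : Matrix (α × Fin 2) (β × Fin 2) ℝ) (x : α) (y : β) :
    blk (a • M) x y = a • blk M x y := rfl

end BlkAux

section Dist1
variable {d : ℕ}

lemma dist1_eq_zero_iff (x y : Fin d → ℤ) : dist1 x y = 0 ↔ x = y := by
  unfold dist1
  rw [Finset.sum_eq_zero_iff]
  constructor
  · intro h; funext i
    have := h i (Finset.mem_univ i)
    omega
  · intro h i _; subst h; simp

lemma dist1_comm (x y : Fin d → ℤ) : dist1 x y = dist1 y x := by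
  unfold dist1; congr 1; funext i; omega

lemma dist1_triangle (x z y : Fin d → ℤ) : dist1 x y ≤ dist1 x z + dist1 z y := by
  unfold dist1
  rw [← Finset.sum_add_distrib]
  apply Finset.sum_le_sum
  intro i _
  omega

lemma sum_natAbs_eq_one {f : Fin d → ℕ} (h : ∑ i, f i = 1) :
    ∃ i, f i = 1 ∧ ∀ j, j ≠ i → f j = 0 := by
  have hne : ∃ i ∈ Finset.univ, f i ≠ 0 := by
    by_contra hc
    push_neg at hc
    rw [Finset.sum_eq_zero (fun i hi => hc i hi)] at h
    omega
  obtain ⟨i, _, hi⟩ := hne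
  have h2 : f i + ∑ j ∈ Finset.univ.erase i, f j = 1 := by
    rw [Finset.add_sum_erase _ _ (Finset.mem_univ i)]; exact h
  have h3 : f i = 1 ∧ ∑ j ∈ Finset.univ.erase i, f j = 0 := by omega
  refine ⟨i, h3.1, fun j hj => ?_⟩
  have := (Finset.sum_eq_zero_iff).mp h3.2 j (Finset.mem_erase.mpr ⟨hj, Finset.mem_univ j⟩)
  exact this

lemma card_neighbors (t : Finset (Fin d → ℤ)) (y : Fin d → ℤ) :
    (t.filter fun z => dist1 z y = 1).card ≤ 2 * d := by
  classical
  have hsub : (t.filter fun z => dist1 z y = 1) ⊆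
      (Finset.univ : Finset (Fin d × Bool)).image
        (fun p => Function.update y p.1 (y p.1 + if p.2 then 1 else -1)) := by
    intro z hz
    rw [Finset.mem_filter] at hz
    obtain ⟨i, hi1, hi0⟩ := sum_natAbs_eq_one hz.2
    rw [Finset.mem_image]
    have hz1 : z i - y i = 1 ∨ z i - y i = -1 := by omega
    refine ⟨(i, if z i - y i = 1 then true else false), Finset.mem_univ _, ?_⟩
    funext j
    by_cases hji : j = i
    · subst hji
      rcases hz1 with h | h <;> simp [Function.update_self, h] <;> omega
    · have := hi0 j hji
      have hzj : z j = y j := by omega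
      simp [Function.update_of_ne hji, hzj]
  calc (t.filter fun z => dist1 z y = 1).card
      ≤ _ := Finset.card_le_card hsub
    _ ≤ (Finset.univ : Finset (Fin d × Bool)).card := Finset.card_image_le
    _ = 2 * d := by simp [Fintype.card_prod]; ring
end Dist1

noncomputable def hmm (w lam : ℝ) : Matrix (Fin 2) (Fin 2) ℝ := !![w - lam, 1; 1, -w - lam]

noncomputable def gmm (w lam : ℝ) : Matrix (Fin 2) (Fin 2) ℝ :=
  (lam ^ 2 - w ^ 2 - 1)⁻¹ • !![-w - lam, -1; -1, w - lam]

section TwoByTwo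

variable {w lam E ε : ℝ}

lemma sqrt_facts (w : ℝ) : (Real.sqrt (w ^ 2 + 1)) ^ 2 = w ^ 2 + 1 ∧ 0 ≤ Real.sqrt (w ^ 2 + 1) :=
  ⟨Real.sq_sqrt (by positivity), Real.sqrt_nonneg _⟩

lemma resolvent_facts (hε : 0 < ε) (h1 : ε ≤ |Real.sqrt (w ^ 2 + 1) - E|)
    (h2 : ε ≤ |Real.sqrt (w ^ 2 + 1) + E|) (hlamE : |lam - E| ≤ ε / 2) :
    ε / 2 ≤ |Real.sqrt (w ^ 2 + 1) - lam| ∧ ε / 2 ≤ |Real.sqrt (w ^ 2 + 1) + lam| := by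
  set s := Real.sqrt (w ^ 2 + 1)
  constructor
  · have := abs_sub_le s lam E
    have h' := abs_sub_le s E lam  -- not needed
    linarith [abs_sub_le s lam E, h1]
  · have : |s + E| ≤ |s + lam| + |lam - E| := by
      have : s + E = (s + lam) + (E - lam) := by ring
      rw [this]
      calc |(s + lam) + (E - lam)| ≤ |s + lam| + |E - lam| := abs_add_le _ _
        _ = |s + lam| + |lam - E| := by rw [abs_sub_comm]
    linarith

lemma delta_ne (hε : 0 < ε) (h1 : ε ≤ |Real.sqrt (w ^ 2 + 1) - E|)
    (h2 : ε ≤ |Real.sqrt (w ^ 2 + 1) + E|) (hlamE : |lam - E| ≤ ε / 2) :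
    lam ^ 2 - w ^ 2 - 1 ≠ 0 := by
  obtain ⟨hs2, hs0⟩ := sqrt_facts w
  obtain ⟨hA, hB⟩ := resolvent_facts hε h1 h2 hlamE
  set s := Real.sqrt (w ^ 2 + 1)
  intro hcon
  have h3 : (s - lam) * (s + lam) = 0 := by nlinarith [hs2]
  rcases mul_eq_zero.mp h3 with h | h
  · rw [h, abs_zero] at hA; linarith
  · rw [h, abs_zero] at hB; linarith

lemma hmm_mul_adj : hmm w lam * !![-w - lam, -1; -1, w - lam] = (lam ^ 2 - w ^ 2 - 1) • (1 : Matrix (Fin 2) (Fin 2) ℝ) := by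
  ext i j
  fin_cases i <;> fin_cases j <;>
    simp [hmm, Matrix.mul_apply, Fin.sum_univ_two, Matrix.one_apply] <;> ring

lemma adj_mul_hmm : !![-w - lam, -1; -1, w - lam] * hmm w lam = (lam ^ 2 - w ^ 2 - 1) • (1 : Matrix (Fin 2) (Fin 2) ℝ) := by
  ext i j
  fin_cases i <;> fin_cases j <;>
    simp [hmm, Matrix.mul_apply, Fin.sum_univ_two, Matrix.one_apply] <;> ring

lemma hmm_mul_gmm (hΔ : lam ^ 2 - w ^ 2 - 1 ≠ 0) : hmm w lam * gmm w lam = 1 := by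
  unfold gmm
  rw [Matrix.mul_smul, hmm_mul_adj, smul_smul, inv_mul_cancel₀ hΔ, one_smul]

lemma gmm_mul_hmm (hΔ : lam ^ 2 - w ^ 2 - 1 ≠ 0) : gmm w lam * hmm w lam = 1 := by
  unfold gmm
  rw [Matrix.smul_mul, adj_mul_hmm, smul_smul, inv_mul_cancel₀ hΔ, one_smul]

lemma gmm_opNorm (hε : 0 < ε) (h1 : ε ≤ |Real.sqrt (w ^ 2 + 1) - E|)
    (h2 : ε ≤ |Real.sqrt (w ^ 2 + 1) + E|) (hlamE : |lam - E| ≤ ε / 2) :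
    opNorm (gmm w lam) ≤ 2 / ε := by
  obtain ⟨hs2, hs0⟩ := sqrt_facts w
  obtain ⟨hA, hB⟩ := resolvent_facts hε h1 h2 hlamE
  have hΔne := delta_ne hε h1 h2 hlamE
  set s := Real.sqrt (w ^ 2 + 1) with hs
  set Δ := lam ^ 2 - w ^ 2 - 1 with hΔdef
  apply opNorm_le_bound _ (by positivity)
  intro v
  set a := v 0 with ha
  set b := v 1 with hb
  have hv0 : Matrix.toEuclideanLin (gmm w lam) v 0 = Δ⁻¹ * ((-w - lam) * a + (-1) * b) := by
    rw [toEuclideanLin_apply']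
    simp [gmm, Fin.sum_univ_two, ← ha, ← hb]
    ring
  have hv1 : Matrix.toEuclideanLin (gmm w lam) v 1 = Δ⁻¹ * ((-1) * a + (w - lam) * b) := by
    rw [toEuclideanLin_apply']
    simp [gmm, Fin.sum_univ_two, ← ha, ← hb]
    ring
  -- squared norms
  have hnormv : ‖v‖ ^ 2 = a ^ 2 + b ^ 2 := by
    rw [EuclideanSpace.norm_eq, Real.sq_sqrt (by positivity)]
    simp [Fin.sum_univ_two, ← ha, ← hb, sq_abs]
  have hnormGv : ‖Matrix.toEuclideanLin (gmm w lam) v‖ ^ 2 =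
      (Δ⁻¹ * ((-w - lam) * a + (-1) * b)) ^ 2 + (Δ⁻¹ * ((-1) * a + (w - lam) * b)) ^ 2 := by
    rw [EuclideanSpace.norm_eq, Real.sq_sqrt (by positivity)]
    rw [Fin.sum_univ_two, hv0, hv1]
    simp only [Real.norm_eq_abs, sq_abs]
  -- key quadratic inequality
  have hs2A : s ^ 2 * (a ^ 2 + b ^ 2) ^ 2 = (w ^ 2 + 1) * (a ^ 2 + b ^ 2) ^ 2 := by rw [hs2]
  have hX : (w * (a ^ 2 - b ^ 2) + 2 * a * b) ^ 2 ≤ (s * (a ^ 2 + b ^ 2)) ^ 2 := by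
    nlinarith [sq_nonneg (2 * w * a * b - (a ^ 2 - b ^ 2)), hs2A]
  have habsX : |w * (a ^ 2 - b ^ 2) + 2 * a * b| ≤ s * (a ^ 2 + b ^ 2) := by
    have hsA : (0:ℝ) ≤ s * (a ^ 2 + b ^ 2) := by positivity
    calc |w * (a ^ 2 - b ^ 2) + 2 * a * b|
        = Real.sqrt ((w * (a ^ 2 - b ^ 2) + 2 * a * b) ^ 2) := (Real.sqrt_sq_eq_abs _).symm
      _ ≤ Real.sqrt ((s * (a ^ 2 + b ^ 2)) ^ 2) := Real.sqrt_le_sqrt hX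
      _ = s * (a ^ 2 + b ^ 2) := Real.sqrt_sq hsA
  have hlamX : lam * (w * (a ^ 2 - b ^ 2) + 2 * a * b) ≤ |lam| * (s * (a ^ 2 + b ^ 2)) := by
    calc lam * (w * (a ^ 2 - b ^ 2) + 2 * a * b)
        ≤ |lam * (w * (a ^ 2 - b ^ 2) + 2 * a * b)| := le_abs_self _
      _ = |lam| * |w * (a ^ 2 - b ^ 2) + 2 * a * b| := abs_mul _ _
      _ ≤ |lam| * (s * (a ^ 2 + b ^ 2)) := mul_le_mul_of_nonneg_left habsX (abs_nonneg _)
  have hs2A' : s ^ 2 * (a ^ 2 + b ^ 2) = (w ^ 2 + 1) * (a ^ 2 + b ^ 2) := by rw [hs2]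
  have habs2A : |lam| ^ 2 * (a ^ 2 + b ^ 2) = lam ^ 2 * (a ^ 2 + b ^ 2) := by rw [sq_abs]
  have hQ : ((w + lam) * a + b) ^ 2 + (a - (w - lam) * b) ^ 2
      ≤ (s + |lam|) ^ 2 * (a ^ 2 + b ^ 2) := by
    have key : (s + |lam|) ^ 2 * (a ^ 2 + b ^ 2)
        - (((w + lam) * a + b) ^ 2 + (a - (w - lam) * b) ^ 2)
        = 2 * (|lam| * (Real.sqrt (w ^ 2 + 1) * (a ^ 2 + b ^ 2))
            - lam * (w * (a ^ 2 - b ^ 2) + 2 * a * b))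
          + (s ^ 2 * (a ^ 2 + b ^ 2) - (w ^ 2 + 1) * (a ^ 2 + b ^ 2))
          + (|lam| ^ 2 * (a ^ 2 + b ^ 2) - lam ^ 2 * (a ^ 2 + b ^ 2)) := by
      rw [← hs]; ring
    linarith [hlamX, hs2A', habs2A, key]
  -- factor inequality
  have hΔsq : Δ ^ 2 = (s - lam) ^ 2 * (s + lam) ^ 2 := by
    have e : (s - lam) ^ 2 * (s + lam) ^ 2 = (s ^ 2 - lam ^ 2) ^ 2 := by ring
    rw [e, hs2, hΔdef]; ring
  have hΔpos : 0 < Δ ^ 2 := by positivity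
  have hfac : (s + |lam|) ^ 2 * ε ^ 2 ≤ 4 * Δ ^ 2 := by
    rcases le_or_gt 0 lam with hl | hl
    · have h1' : s + |lam| = |s + lam| := by
        rw [abs_of_nonneg hl, abs_of_nonneg (by linarith)]
      have hA2 : (ε / 2) ^ 2 ≤ (s - lam) ^ 2 := by
        calc (ε / 2) ^ 2 ≤ |s - lam| ^ 2 := by gcongr <;> linarith
          _ = (s - lam) ^ 2 := sq_abs _
      have hε2 : ε ^ 2 ≤ 4 * (s - lam) ^ 2 := by
        have h' : (ε / 2) ^ 2 = ε ^ 2 / 4 := by ring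
        linarith [hA2]
      rw [h1', hΔsq]
      calc |s + lam| ^ 2 * ε ^ 2 = (s + lam) ^ 2 * ε ^ 2 := by rw [sq_abs]
        _ ≤ (s + lam) ^ 2 * (4 * (s - lam) ^ 2) :=
            mul_le_mul_of_nonneg_left hε2 (sq_nonneg _)
        _ = 4 * ((s - lam) ^ 2 * (s + lam) ^ 2) := by ring
    · have h1' : s + |lam| = |s - lam| := by
        rw [abs_of_neg hl, abs_of_nonneg (by linarith)]
        ring
      have hB2 : (ε / 2) ^ 2 ≤ (s + lam) ^ 2 := by
        calc (ε / 2) ^ 2 ≤ |s + lam| ^ 2 := by gcongr <;> linarith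
          _ = (s + lam) ^ 2 := sq_abs _
      have hε2 : ε ^ 2 ≤ 4 * (s + lam) ^ 2 := by
        have h' : (ε / 2) ^ 2 = ε ^ 2 / 4 := by ring
        linarith [hB2]
      rw [h1', hΔsq]
      calc |s - lam| ^ 2 * ε ^ 2 = (s - lam) ^ 2 * ε ^ 2 := by rw [sq_abs]
        _ ≤ (s - lam) ^ 2 * (4 * (s + lam) ^ 2) :=
            mul_le_mul_of_nonneg_left hε2 (sq_nonneg _)
        _ = 4 * ((s - lam) ^ 2 * (s + lam) ^ 2) := by ring
  -- conclude squared inequality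
  have hsq : ‖Matrix.toEuclideanLin (gmm w lam) v‖ ^ 2 ≤ (2 / ε * ‖v‖) ^ 2 := by
    rw [hnormGv]
    have e1 : (Δ⁻¹ * ((-w - lam) * a + (-1) * b)) ^ 2 + (Δ⁻¹ * ((-1) * a + (w - lam) * b)) ^ 2
        = (((w + lam) * a + b) ^ 2 + (a - (w - lam) * b) ^ 2) / Δ ^ 2 := by
      field_simp
      ring
    rw [e1]
    have e2 : (2 / ε * ‖v‖) ^ 2 = 4 / ε ^ 2 * (a ^ 2 + b ^ 2) := by
      rw [mul_pow, hnormv]; ring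
    rw [e2]
    have h4 : (s + |lam|) ^ 2 / Δ ^ 2 ≤ 4 / ε ^ 2 := by
      rw [div_le_div_iff₀ hΔpos (by positivity)]
      linarith [hfac]
    calc (((w + lam) * a + b) ^ 2 + (a - (w - lam) * b) ^ 2) / Δ ^ 2
        ≤ ((s + |lam|) ^ 2 * (a ^ 2 + b ^ 2)) / Δ ^ 2 := by gcongr
      _ = ((s + |lam|) ^ 2 / Δ ^ 2) * (a ^ 2 + b ^ 2) := by ring
      _ ≤ 4 / ε ^ 2 * (a ^ 2 + b ^ 2) := mul_le_mul_of_nonneg_right h4 (by positivity)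
  calc ‖Matrix.toEuclideanLin (gmm w lam) v‖
      = Real.sqrt (‖Matrix.toEuclideanLin (gmm w lam) v‖ ^ 2) := (Real.sqrt_sq (norm_nonneg _)).symm
    _ ≤ Real.sqrt ((2 / ε * ‖v‖) ^ 2) := Real.sqrt_le_sqrt hsq
    _ = 2 / ε * ‖v‖ := Real.sqrt_sq (by positivity)

end TwoByTwo

attribute [local instance] Matrix.linftyOpNormedRing Matrix.linftyOpNormedAlgebra

section LinftyAux
variable {n : Type*} [Fintype n] [DecidableEq n]

lemma linfty_norm_le_of_rows (M : Matrix n n ℝ) {c : ℝ} (hc : 0 ≤ c)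
    (h : ∀ i, ∑ j, |M i j| ≤ c) : ‖M‖ ≤ c := by
  rw [Matrix.linfty_opNorm_def, ← NNReal.coe_mk c hc, NNReal.coe_le_coe]
  apply Finset.sup_le
  intro i _
  rw [← NNReal.coe_le_coe, NNReal.coe_mk]
  push_cast
  simpa [Real.norm_eq_abs] using h i

lemma row_le_linfty (M : Matrix n n ℝ) (i : n) : ∑ j, |M i j| ≤ ‖M‖ := by
  rw [Matrix.linfty_opNorm_def]
  have h := Finset.le_sup (f := fun i : n => ∑ j, ‖M i j‖₊) (Finset.mem_univ i)
  calc ∑ j, |M i j| = ((∑ j, ‖M i j‖₊ : NNReal) : ℝ) := by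
        push_cast; simp [Real.norm_eq_abs]
    _ ≤ _ := NNReal.coe_le_coe.mpr h

lemma entry_le_linfty (M : Matrix n n ℝ) (i j : n) : |M i j| ≤ ‖M‖ := by
  calc |M i j| ≤ ∑ j', |M i j'| :=
        Finset.single_le_sum (f := fun j' => |M i j'|) (fun _ _ => abs_nonneg _)
          (Finset.mem_univ j)
    _ ≤ ‖M‖ := row_le_linfty M i

lemma norm_pow_le_linfty (M : Matrix n n ℝ) (N : ℕ) : ‖M ^ N‖ ≤ ‖M‖ ^ N := by
  induction N with
  | zero =>
      rw [pow_zero, pow_zero]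
      apply linfty_norm_le_of_rows _ zero_le_one
      intro i
      have habs : ∀ x, |(1 : Matrix n n ℝ) i x| = if i = x then (1:ℝ) else 0 := by
        intro x; by_cases h : i = x <;> simp [Matrix.one_apply, h]
      rw [Finset.sum_congr rfl (fun x _ => habs x)]
      simp
  | succ k ih =>
      rw [pow_succ, pow_succ]
      calc ‖M ^ k * M‖ ≤ ‖M ^ k‖ * ‖M‖ := Matrix.linfty_opNorm_mul _ _
        _ ≤ ‖M‖ ^ k * ‖M‖ := mul_le_mul_of_nonneg_right ih (norm_nonneg _)

end LinftyAux

lemma opNorm_add_le {m n : Type*} [Fintype m] [Fintype n] [DecidableEq n]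
    (M N : Matrix m n ℝ) : opNorm (M + N) ≤ opNorm M + opNorm N := by
  unfold opNorm
  rw [map_add, map_add]
  exact norm_add_le _ _

lemma opNorm_blk_le_linfty {α : Type*} [Fintype α] [DecidableEq α]
    (M : Matrix (α × Fin 2) (α × Fin 2) ℝ) (x y : α) : opNorm (blk M x y) ≤ 4 * ‖M‖ := by
  calc opNorm (blk M x y) ≤ ∑ i, ∑ j, |blk M x y i j| := opNorm_le_sum_abs _
    _ ≤ ∑ i : Fin 2, ∑ j : Fin 2, ‖M‖ := by
        apply Finset.sum_le_sum; intro i _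
        apply Finset.sum_le_sum; intro j _
        exact entry_le_linfty M (x, i) (y, j)
    _ = 4 * ‖M‖ := by simp [Fin.sum_univ_two]; ring

lemma sum_ite_le_card_mul {ι : Type*} [Fintype ι] (p : ι → Prop) [DecidablePred p]
    {c : ℝ} (hc : 0 ≤ c) (f : ι → ℝ) (hf : ∀ z, f z ≤ if p z then c else 0) {n : ℕ}
    (hcard : (Finset.univ.filter p).card ≤ n) : ∑ z, f z ≤ (n : ℝ) * c := by
  calc ∑ z, f z ≤ ∑ z, (if p z then c else 0) := Finset.sum_le_sum (fun z _ => hf z)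
    _ = ∑ z ∈ Finset.univ.filter p, c := (Finset.sum_filter _ _).symm
    _ = ((Finset.univ.filter p).card : ℝ) * c := by rw [Finset.sum_const, nsmul_eq_mul]
    _ ≤ (n : ℝ) * c := mul_le_mul_of_nonneg_right (by exact_mod_cast hcard) hc

lemma card_nbr_subtype {d : ℕ} (Λ' : Finset (Fin d → ℤ)) (y : Fin d → ℤ) :
    (Finset.univ.filter (fun z : {x // x ∈ Λ'} => dist1 (z : Fin d → ℤ) y = 1)).card ≤ 2 * d := by
  refine le_trans (Finset.card_le_card_of_injOn (fun z => (z : Fin d → ℤ)) ?_ ?_)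
    (card_neighbors Λ' y)
  · intro z hz
    rw [Finset.mem_coe, Finset.mem_filter] at hz ⊢
    exact ⟨z.2, hz.2⟩
  · intro a _ b _ hab
    exact Subtype.ext hab

lemma geom_tail_le {r : ℝ} (hr0 : 0 ≤ r) (hr : r ≤ 1/2) (m N : ℕ) :
    (∑ k ∈ Finset.range N, if m ≤ k then r ^ k else 0) ≤ 2 * r ^ m := by
  have h1 : (∑ k ∈ Finset.range N, if m ≤ k then r ^ k else 0) = ∑ k ∈ Finset.Ico m N, r ^ k := by
    rw [← Finset.sum_filter]
    congr 1
    ext k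
    simp [Finset.mem_filter, Finset.mem_range, Finset.mem_Ico]
    omega
  rw [h1]
  rcases le_or_gt m N with hmN | hmN
  · rw [Finset.sum_Ico_eq_sum_range]
    have h2 : ∀ i, r ^ (m + i) = r ^ m * r ^ i := fun i => pow_add r m i
    calc ∑ i ∈ Finset.range (N - m), r ^ (m + i)
        = r ^ m * ∑ i ∈ Finset.range (N - m), r ^ i := by
          rw [Finset.mul_sum]; exact Finset.sum_congr rfl (fun i _ => h2 i)
      _ ≤ r ^ m * 2 := by
          apply mul_le_mul_of_nonneg_left _ (pow_nonneg hr0 m)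
          have hhalf : ∑ i ∈ Finset.range (N - m), ((1:ℝ)/2) ^ i ≤ 2 := by
            rw [geom_sum_eq (by norm_num)]
            have h0 : (0:ℝ) ≤ (1/2:ℝ) ^ (N - m) := by positivity
            rw [div_le_iff_of_neg (by norm_num)]
            nlinarith
          calc ∑ i ∈ Finset.range (N - m), r ^ i
              ≤ ∑ i ∈ Finset.range (N - m), ((1:ℝ)/2) ^ i :=
                Finset.sum_le_sum fun i _ => pow_le_pow_left₀ hr0 hr i
            _ ≤ 2 := hhalf
      _ = 2 * r ^ m := by ring
  · rw [Finset.Ico_eq_empty (by omega)]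
    simp
    positivity


/-- there is `c_d > 0` such that if `2·c_d·γ ≤ ε` and all positions of
`Λ' ⊆ Λ` are `ε`-nonresonant with `E`, then for `|λ-E| ≤ ε/2` the 2×2 blocks of the
eigenfunction-generating kernel `(D-λ·I)⁻¹C` between `x ∈ Λ'` and `y ∈ R = Λ ∖ Λ'` are
bounded by `(c_d·γ/ε)^{max(|x-y|,1)}`. -/
theorem kernel_block_decay (d : ℕ) (hd : 1 ≤ d) :
    ∃ c : ℝ, 0 < c ∧
      ∀ (γ E ε : ℝ), 0 < γ → 0 < ε → 2 * c * γ ≤ ε →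
      ∀ (Λ : Finset (Fin d → ℤ)), (∃ a b, Λ = Finset.Icc a b) →
      ∀ (u : {x // x ∈ Λ} → ℝ), (∀ x, u x ∈ Set.Icc (-1 : ℝ) 1) →
      ∀ (Λ' : Finset (Fin d → ℤ)) (hsub : Λ' ⊆ Λ),
      (∀ x : {x // x ∈ Λ'},
          ε ≤ |Real.sqrt (u ⟨x.1, hsub x.2⟩ ^ 2 + 1) - E| ∧
          ε ≤ |Real.sqrt (u ⟨x.1, hsub x.2⟩ ^ 2 + 1) + E|) →
      ∀ lam : ℝ, |lam - E| ≤ ε / 2 →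
      ∀ (x : {x // x ∈ Λ'}) (y : {x // x ∈ Λ \ Λ'}),
        opNorm (blk ((Dmat d γ Λ Λ' hsub u - lam • 1)⁻¹ * Cmat d γ Λ Λ' hsub u) x y) ≤
          (c * γ / ε) ^ max (dist1 (x : Fin d → ℤ) (y : Fin d → ℤ)) 1 := by
  classical
  have hd0 : (0:ℝ) < (d:ℝ) := by exact_mod_cast Nat.lt_of_lt_of_le Nat.zero_lt_one hd
  refine ⟨8 * d, by positivity, ?_⟩
  intro γ E ε hγ hε hcε Λ _ u hu Λ' hsub hnr lam hlam x y
  haveI : Nonempty ({x // x ∈ Λ'} × Fin 2) := ⟨(x, 0)⟩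
  -- numeric setup
  set κ : ℝ := 2 * γ / ε with hκdef
  have hκ0 : 0 < κ := by positivity
  set r : ℝ := (2 * (d:ℝ)) * κ with hrdef
  have hr0 : 0 ≤ r := by positivity
  have hrq : r ≤ 1 / 4 := by
    rw [hrdef, hκdef]
    rw [show (2 * (d:ℝ)) * (2 * γ / ε) = (4 * d * γ) / ε by ring]
    rw [div_le_div_iff₀ hε (by norm_num)]
    nlinarith [hcε]
  have hr1 : r ≤ 1 := by linarith
  -- matrices
  set A := bd (fun z : {x // x ∈ Λ'} => hmm (u ⟨z.1, hsub z.2⟩) lam) with hAdef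
  set Ai := bd (fun z : {x // x ∈ Λ'} => gmm (u ⟨z.1, hsub z.2⟩) lam) with hAidef
  set K := Dmat d γ Λ Λ' hsub u - lam • 1 - A with hKdef
  set P := -(Ai * K) with hPdef
  have hΔ : ∀ z : {x // x ∈ Λ'}, lam ^ 2 - (u ⟨z.1, hsub z.2⟩) ^ 2 - 1 ≠ 0 :=
    fun z => delta_ne hε (hnr z).1 (hnr z).2 hlam
  have hAAi : A * Ai = 1 := by
    rw [hAdef, hAidef, bd_mul_bd]
    have he : (fun z : {x // x ∈ Λ'} =>
        hmm (u ⟨z.1, hsub z.2⟩) lam * gmm (u ⟨z.1, hsub z.2⟩) lam) = fun _ => 1 :=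
      funext fun z => hmm_mul_gmm (hΔ z)
    rw [he, bd_one]
  have hgnorm : ∀ z : {x // x ∈ Λ'}, opNorm (gmm (u ⟨z.1, hsub z.2⟩) lam) ≤ 2 / ε :=
    fun z => gmm_opNorm hε (hnr z).1 (hnr z).2 hlam
  -- the block structure of K
  have hKblk : ∀ z y' : {x // x ∈ Λ'}, blk K z y' =
      if dist1 (z : Fin d → ℤ) (y' : Fin d → ℤ) = 1
      then γ • (1 : Matrix (Fin 2) (Fin 2) ℝ) else 0 := by
    intro z y'
    by_cases hzy : z = y'
    · subst hzy
      have h0 : dist1 (z : Fin d → ℤ) (z : Fin d → ℤ) = 0 := by simp [dist1]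
      rw [if_neg (by omega)]
      ext i j
      rw [hKdef]
      show Dmat d γ Λ Λ' hsub u (z, i) (z, j) -
          (lam • (1 : Matrix ({x // x ∈ Λ'} × Fin 2) ({x // x ∈ Λ'} × Fin 2) ℝ)) (z, i) (z, j) -
          A (z, i) (z, j) = (0 : Matrix (Fin 2) (Fin 2) ℝ) i j
      have hD : Dmat d γ Λ Λ' hsub u (z, i) (z, j) =
          if i = j then (if i = 0 then u ⟨z.1, hsub z.2⟩ else -u ⟨z.1, hsub z.2⟩) else 1 := by
        show Ham d γ Λ u (⟨z.1, hsub z.2⟩, i) (⟨z.1, hsub z.2⟩, j) = _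
        simp only [Ham]
        simp
      have hAe : A (z, i) (z, j) = hmm (u ⟨z.1, hsub z.2⟩) lam i j := by
        rw [hAdef]
        show (if (z : {x // x ∈ Λ'}) = z then hmm (u ⟨z.1, hsub z.2⟩) lam i j else 0) = _
        rw [if_pos rfl]
      rw [Matrix.smul_apply, hD, hAe, Matrix.one_apply, Matrix.zero_apply]
      fin_cases i <;> fin_cases j <;> simp [hmm, Prod.ext_iff] <;> ring
    · have hzy' : (z : Fin d → ℤ) ≠ (y' : Fin d → ℤ) := fun h => hzy (Subtype.ext h)
      have hzy2 : (⟨z.1, hsub z.2⟩ : {x // x ∈ Λ}) ≠ ⟨y'.1, hsub y'.2⟩ := by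
        intro h
        apply hzy'
        exact congrArg (fun t : {x // x ∈ Λ} => (t : Fin d → ℤ)) h
      have hD : ∀ i j : Fin 2, Dmat d γ Λ Λ' hsub u (z, i) (y', j) =
          if dist1 (z : Fin d → ℤ) (y' : Fin d → ℤ) = 1
          then (if i = j then γ else 0) else 0 := by
        intro i j
        show Ham d γ Λ u (⟨z.1, hsub z.2⟩, i) (⟨y'.1, hsub y'.2⟩, j) = _
        simp only [Ham]
        rw [if_neg hzy2]
      have h1e : ∀ i j : Fin 2,
          (1 : Matrix ({x // x ∈ Λ'} × Fin 2) ({x // x ∈ Λ'} × Fin 2) ℝ) (z, i) (y', j) = 0 := by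
        intro i j
        rw [Matrix.one_apply, if_neg]
        simp [Prod.ext_iff, hzy]
      have hAe : ∀ i j : Fin 2, A (z, i) (y', j) = 0 := by
        intro i j
        rw [hAdef]
        show (if (z : {x // x ∈ Λ'}) = y' then hmm (u ⟨z.1, hsub z.2⟩) lam i j else 0) = 0
        rw [if_neg hzy]
      ext i j
      rw [hKdef]
      show Dmat d γ Λ Λ' hsub u (z, i) (y', j) -
          (lam • (1 : Matrix ({x // x ∈ Λ'} × Fin 2) ({x // x ∈ Λ'} × Fin 2) ℝ)) (z, i) (y', j) -
          A (z, i) (y', j) = _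
      rw [Matrix.smul_apply, hD i j, h1e i j, hAe i j]
      by_cases hdist : dist1 (z : Fin d → ℤ) (y' : Fin d → ℤ) = 1
      · rw [if_pos hdist, if_pos hdist]
        by_cases hij : i = j <;> simp [hij, Matrix.one_apply]
      · rw [if_neg hdist, if_neg hdist]
        simp
  -- the block structure of C
  have hCblk : ∀ (z : {x // x ∈ Λ'}) (w : {x // x ∈ Λ \ Λ'}),
      blk (Cmat d γ Λ Λ' hsub u) z w =
      if dist1 (z : Fin d → ℤ) (w : Fin d → ℤ) = 1
      then γ • (1 : Matrix (Fin 2) (Fin 2) ℝ) else 0 := by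
    intro z w
    have hzw : (⟨z.1, hsub z.2⟩ : {x // x ∈ Λ}) ≠
        ⟨w.1, (Finset.mem_sdiff.mp w.2).1⟩ := by
      intro h
      have hv : (z : Fin d → ℤ) = (w : Fin d → ℤ) :=
        congrArg (fun t : {x // x ∈ Λ} => (t : Fin d → ℤ)) h
      exact (Finset.mem_sdiff.mp w.2).2 (hv ▸ z.2)
    have hD : ∀ i j : Fin 2, Cmat d γ Λ Λ' hsub u (z, i) (w, j) =
        if dist1 (z : Fin d → ℤ) (w : Fin d → ℤ) = 1
        then (if i = j then γ else 0) else 0 := by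
      intro i j
      show Ham d γ Λ u (⟨z.1, hsub z.2⟩, i) (⟨w.1, (Finset.mem_sdiff.mp w.2).1⟩, j) = _
      simp only [Ham]
      rw [if_neg hzw]
    ext i j
    show Cmat d γ Λ Λ' hsub u (z, i) (w, j) = _
    rw [hD i j]
    by_cases hdist : dist1 (z : Fin d → ℤ) (w : Fin d → ℤ) = 1
    · rw [if_pos hdist, if_pos hdist]
      by_cases hij : i = j <;> simp [hij, Matrix.one_apply]
    · rw [if_neg hdist, if_neg hdist]
      simp
  -- the block structure of P
  have hPblk : ∀ z y' : {x // x ∈ Λ'}, blk P z y' =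
      if dist1 (z : Fin d → ℤ) (y' : Fin d → ℤ) = 1
      then (-γ) • gmm (u ⟨z.1, hsub z.2⟩) lam else 0 := by
    intro z y'
    rw [hPdef, blk_neg, hAidef, blk_bd_mul, hKblk]
    by_cases hdist : dist1 (z : Fin d → ℤ) (y' : Fin d → ℤ) = 1
    · rw [if_pos hdist, if_pos hdist, Matrix.mul_smul, Matrix.mul_one, ← neg_smul]
    · rw [if_neg hdist, if_neg hdist, Matrix.mul_zero, neg_zero]
  -- block norm bound for P
  have hPn : ∀ z y' : {x // x ∈ Λ'}, opNorm (blk P z y') ≤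
      if dist1 (z : Fin d → ℤ) (y' : Fin d → ℤ) = 1 then κ else 0 := by
    intro z y'
    rw [hPblk]
    by_cases hdist : dist1 (z : Fin d → ℤ) (y' : Fin d → ℤ) = 1
    · rw [if_pos hdist, if_pos hdist, opNorm_smul]
      have h1 : |(-γ)| = γ := by rw [abs_neg, abs_of_pos hγ]
      rw [h1]
      calc γ * opNorm (gmm (u ⟨z.1, hsub z.2⟩) lam) ≤ γ * (2 / ε) :=
            mul_le_mul_of_nonneg_left (hgnorm z) hγ.le
        _ = κ := by rw [hκdef]; ring
    · rw [if_neg hdist, if_neg hdist, opNorm_zero]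
  -- power bounds
  have hpow : ∀ k : ℕ,
      (∀ z y' : {x // x ∈ Λ'}, opNorm (blk (P ^ k) z y') ≤ r ^ k) ∧
      (∀ z y' : {x // x ∈ Λ'},
        k < dist1 (z : Fin d → ℤ) (y' : Fin d → ℤ) → blk (P ^ k) z y' = 0) := by
    intro k
    induction k with
    | zero =>
        constructor
        · intro z y'
          rw [pow_zero, blk_one, pow_zero]
          by_cases hzy : z = y'
          · rw [if_pos hzy]; exact opNorm_one_le
          · rw [if_neg hzy, opNorm_zero]; linarith
        · intro z y' hk
          have hzy : z ≠ y' := by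
            intro h; subst h
            have h0 : dist1 (z : Fin d → ℤ) (z : Fin d → ℤ) = 0 := by simp [dist1]
            omega
          rw [pow_zero, blk_one, if_neg hzy]
    | succ k ih =>
        constructor
        · intro z y'
          rw [pow_succ, blk_mul]
          calc opNorm (∑ z', blk (P ^ k) z z' * blk P z' y')
              ≤ ∑ z', opNorm (blk (P ^ k) z z' * blk P z' y') := opNorm_sum_le _ _
            _ ≤ ((2 * d : ℕ) : ℝ) * (r ^ k * κ) := by
                apply sum_ite_le_card_mul
                  (p := fun z' : {x // x ∈ Λ'} =>
                    dist1 (z' : Fin d → ℤ) (y' : Fin d → ℤ) = 1)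
                  (by positivity) _ ?_ (card_nbr_subtype Λ' (y' : Fin d → ℤ))
                intro z'
                by_cases hdist : dist1 (z' : Fin d → ℤ) (y' : Fin d → ℤ) = 1
                · rw [if_pos hdist]
                  have h2 := hPn z' y'
                  rw [if_pos hdist] at h2
                  calc opNorm (blk (P ^ k) z z' * blk P z' y')
                      ≤ opNorm (blk (P ^ k) z z') * opNorm (blk P z' y') := opNorm_mul_le _ _
                    _ ≤ r ^ k * κ :=
                        mul_le_mul (ih.1 z z') h2 (opNorm_nonneg _) (pow_nonneg hr0 k)
                · rw [if_neg hdist]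
                  have h2 := hPn z' y'
                  rw [if_neg hdist] at h2
                  have h3 : opNorm (blk P z' y') = 0 := le_antisymm h2 (opNorm_nonneg _)
                  calc opNorm (blk (P ^ k) z z' * blk P z' y')
                      ≤ opNorm (blk (P ^ k) z z') * opNorm (blk P z' y') := opNorm_mul_le _ _
                    _ = 0 := by rw [h3, mul_zero]
            _ = r ^ (k + 1) := by
                rw [pow_succ, hrdef]
                push_cast
                ring
        · intro z y' hk
          rw [pow_succ, blk_mul]
          apply Finset.sum_eq_zero
          intro z' _
          by_cases hdist : dist1 (z' : Fin d → ℤ) (y' : Fin d → ℤ) = 1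
          · have htri := dist1_triangle (z : Fin d → ℤ) (z' : Fin d → ℤ) (y' : Fin d → ℤ)
            have hlt : k < dist1 (z : Fin d → ℤ) (z' : Fin d → ℤ) := by omega
            rw [ih.2 z z' hlt, Matrix.zero_mul]
          · have h2 := hPblk z' y'
            rw [if_neg hdist] at h2
            rw [h2, Matrix.mul_zero]
  -- operator norm (L1-L∞) bound for P
  have hPnorm : ‖P‖ ≤ 2 * r := by
    apply linfty_norm_le_of_rows _ (by positivity)
    rintro ⟨z, i⟩
    calc ∑ t, |P (z, i) t| = ∑ z', ∑ j, |P (z, i) (z', j)| := by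
          rw [Fintype.sum_prod_type]
      _ ≤ ((2 * d : ℕ) : ℝ) * (2 * κ) := by
          apply sum_ite_le_card_mul
            (p := fun z' : {x // x ∈ Λ'} =>
              dist1 (z' : Fin d → ℤ) (z : Fin d → ℤ) = 1)
            (by positivity) _ ?_ (card_nbr_subtype Λ' (z : Fin d → ℤ))
          intro z'
          have hent : ∀ j, |P (z, i) (z', j)| ≤ opNorm (blk P z z') := fun j =>
            abs_entry_le_opNorm (blk P z z') i j
          have h2 := hPn z z'
          by_cases hdist : dist1 (z' : Fin d → ℤ) (z : Fin d → ℤ) = 1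
          · rw [if_pos hdist]
            rw [if_pos (by rw [dist1_comm]; exact hdist)] at h2
            calc ∑ j, |P (z, i) (z', j)| ≤ ∑ j : Fin 2, opNorm (blk P z z') :=
                  Finset.sum_le_sum fun j _ => hent j
              _ = 2 * opNorm (blk P z z') := by
                  rw [Finset.sum_const, Finset.card_univ, Fintype.card_fin, nsmul_eq_mul]
                  norm_num
              _ ≤ 2 * κ := by linarith
          · rw [if_neg hdist]
            rw [if_neg (by rw [dist1_comm]; exact hdist)] at h2
            have h3 : opNorm (blk P z z') = 0 := le_antisymm h2 (opNorm_nonneg _)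
            calc ∑ j, |P (z, i) (z', j)| ≤ ∑ j : Fin 2, opNorm (blk P z z') :=
                  Finset.sum_le_sum fun j _ => hent j
              _ = 0 := by rw [h3]; simp
      _ = 2 * r := by rw [hrdef]; push_cast; ring
  have hPhalf : ‖P‖ ≤ 1 / 2 := by linarith
  have hPlt1 : ‖P‖ < 1 := by linarith
  -- invertibility of 1 - P
  have hdet : (1 - P).det ≠ 0 := by
    intro hdet0
    obtain ⟨v, hv0, hv⟩ := (Matrix.exists_mulVec_eq_zero_iff).mpr hdet0
    have hvP : v = P *ᵥ v := by
      have h1 : (1 - P) *ᵥ v = v - P *ᵥ v := by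
        rw [Matrix.sub_mulVec, Matrix.one_mulVec]
      rw [h1] at hv
      exact sub_eq_zero.mp hv
    have h2 : ‖v‖ ≤ ‖P‖ * ‖v‖ := by
      conv_lhs => rw [hvP]
      exact Matrix.linfty_opNorm_mulVec _ _
    have h3 : 0 < ‖v‖ := norm_pos_iff.mpr hv0
    nlinarith [hPlt1]
  have hunit : IsUnit (1 - P).det := isUnit_iff_ne_zero.mpr hdet
  set G := (1 - P)⁻¹ with hGdef
  have hG1 : (1 - P) * G = 1 := Matrix.mul_nonsing_inv _ hunit
  -- inverse identity
  have hAP : A * P = -K := by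
    rw [hPdef, Matrix.mul_neg, ← mul_assoc, hAAi, one_mul]
  have hD'fact : Dmat d γ Λ Λ' hsub u - lam • 1 = A * (1 - P) := by
    rw [Matrix.mul_sub, Matrix.mul_one, hAP, sub_neg_eq_add, hKdef]
    abel
  have hinv : (Dmat d γ Λ Λ' hsub u - lam • 1)⁻¹ = G * Ai := by
    apply Matrix.inv_eq_right_inv
    calc (Dmat d γ Λ Λ' hsub u - lam • 1) * (G * Ai)
        = (A * (1 - P)) * (G * Ai) := by rw [hD'fact]
      _ = A * ((1 - P) * (G * Ai)) := mul_assoc _ _ _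
      _ = A * (((1 - P) * G) * Ai) := by rw [mul_assoc]
      _ = A * Ai := by rw [hG1, one_mul]
      _ = 1 := hAAi
  -- geometric expansion
  have hgeom : ∀ N, G = (∑ k ∈ Finset.range N, P ^ k) + P ^ N * G := by
    intro N
    have h1 : (∑ k ∈ Finset.range N, P ^ k) * (1 - P) = 1 - P ^ N := by
      have h2 := geom_sum_mul P N
      have h3 : (∑ k ∈ Finset.range N, P ^ k) * (1 - P) =
          -((∑ k ∈ Finset.range N, P ^ k) * (P - 1)) := by
        rw [← neg_sub P 1, Matrix.mul_neg]
      rw [h3, h2, neg_sub]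
    calc G = 1 * G := (one_mul G).symm
      _ = ((∑ k ∈ Finset.range N, P ^ k) * (1 - P) + P ^ N) * G := by
          rw [h1, sub_add_cancel]
      _ = (∑ k ∈ Finset.range N, P ^ k) * ((1 - P) * G) + P ^ N * G := by
          rw [add_mul, mul_assoc]
      _ = (∑ k ∈ Finset.range N, P ^ k) + P ^ N * G := by rw [hG1, mul_one]
  -- block bound for G
  have hGblk : ∀ z z' : {x // x ∈ Λ'}, opNorm (blk G z z') ≤
      2 * r ^ (dist1 (z : Fin d → ℤ) (z' : Fin d → ℤ)) := by
    intro z z'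
    set m' := dist1 (z : Fin d → ℤ) (z' : Fin d → ℤ) with hm'
    have hbound : ∀ N : ℕ, opNorm (blk G z z') ≤ 2 * r ^ m' + 4 * ‖G‖ * ‖P‖ ^ N := by
      intro N
      have hsplit : blk G z z' =
          (∑ k ∈ Finset.range N, blk (P ^ k) z z') + blk (P ^ N * G) z z' := by
        conv_lhs => rw [hgeom N]
        rw [blk_add, blk_sum]
      rw [hsplit]
      calc opNorm ((∑ k ∈ Finset.range N, blk (P ^ k) z z') + blk (P ^ N * G) z z')
          ≤ opNorm (∑ k ∈ Finset.range N, blk (P ^ k) z z') +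
            opNorm (blk (P ^ N * G) z z') := opNorm_add_le _ _
        _ ≤ (∑ k ∈ Finset.range N, opNorm (blk (P ^ k) z z')) + 4 * ‖P ^ N * G‖ :=
            add_le_add (opNorm_sum_le _ _) (opNorm_blk_le_linfty _ _ _)
        _ ≤ (∑ k ∈ Finset.range N, if m' ≤ k then r ^ k else 0) + 4 * ‖P ^ N * G‖ := by
            refine add_le_add ?_ le_rfl
            apply Finset.sum_le_sum
            intro k _
            by_cases hmk : m' ≤ k
            · rw [if_pos hmk]; exact (hpow k).1 z z'
            · rw [if_neg hmk]
              rw [(hpow k).2 z z' (by omega), opNorm_zero]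
        _ ≤ 2 * r ^ m' + 4 * ‖G‖ * ‖P‖ ^ N := by
            apply add_le_add (geom_tail_le hr0 (by linarith) m' N)
            have h4 : ‖P ^ N * G‖ ≤ ‖P ^ N‖ * ‖G‖ := Matrix.linfty_opNorm_mul _ _
            have h5 : ‖P ^ N‖ ≤ ‖P‖ ^ N := norm_pow_le_linfty P N
            calc 4 * ‖P ^ N * G‖ ≤ 4 * (‖P ^ N‖ * ‖G‖) := by linarith
              _ ≤ 4 * (‖P‖ ^ N * ‖G‖) := by
                  have := mul_le_mul_of_nonneg_right h5 (norm_nonneg G)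
                  linarith
              _ = 4 * ‖G‖ * ‖P‖ ^ N := by ring
    have hlim : Filter.Tendsto (fun N : ℕ => 2 * r ^ m' + 4 * ‖G‖ * ‖P‖ ^ N)
        Filter.atTop (nhds (2 * r ^ m' + 4 * ‖G‖ * 0)) := by
      apply Filter.Tendsto.const_add
      apply Filter.Tendsto.const_mul
      exact tendsto_pow_atTop_nhds_zero_of_lt_one (norm_nonneg P) hPlt1
    have hfin := ge_of_tendsto' hlim hbound
    simpa using hfin
  -- final assembly
  rw [hinv]
  have htarget : blk (G * Ai * Cmat d γ Λ Λ' hsub u) x y =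
      ∑ x' : {x // x ∈ Λ'}, blk (G * Ai) x x' * blk (Cmat d γ Λ Λ' hsub u) x' y :=
    blk_mul _ _ _ _
  rw [htarget]
  set m := max (dist1 (x : Fin d → ℤ) (y : Fin d → ℤ)) 1 with hmdef
  have hm1 : 1 ≤ m := le_max_right _ _
  have hCn : opNorm (γ • (1 : Matrix (Fin 2) (Fin 2) ℝ)) ≤ γ := by
    rw [opNorm_smul]
    calc |γ| * opNorm (1 : Matrix (Fin 2) (Fin 2) ℝ) ≤ |γ| * 1 :=
        mul_le_mul_of_nonneg_left opNorm_one_le (abs_nonneg γ)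
      _ = γ := by rw [mul_one, abs_of_pos hγ]
  calc opNorm (∑ x' : {x // x ∈ Λ'}, blk (G * Ai) x x' * blk (Cmat d γ Λ Λ' hsub u) x' y)
      ≤ ∑ x' : {x // x ∈ Λ'},
          opNorm (blk (G * Ai) x x' * blk (Cmat d γ Λ Λ' hsub u) x' y) := opNorm_sum_le _ _
    _ ≤ ((2 * d : ℕ) : ℝ) * (2 * r ^ (m - 1) * (2 / ε) * γ) := by
        apply sum_ite_le_card_mul
          (p := fun x' : {x // x ∈ Λ'} =>
            dist1 (x' : Fin d → ℤ) (y : Fin d → ℤ) = 1)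
          (by positivity) _ ?_ (card_nbr_subtype Λ' (y : Fin d → ℤ))
        intro x'
        by_cases hdist : dist1 (x' : Fin d → ℤ) (y : Fin d → ℤ) = 1
        · rw [if_pos hdist]
          have hC1 : blk (Cmat d γ Λ Λ' hsub u) x' y = γ • 1 := by
            rw [hCblk, if_pos hdist]
          rw [hC1]
          have hGA : blk (G * Ai) x x' = blk G x x' * gmm (u ⟨x'.1, hsub x'.2⟩) lam := by
            rw [hAidef, blk_mul_bd]
          rw [hGA]
          have hmd : m - 1 ≤ dist1 (x : Fin d → ℤ) (x' : Fin d → ℤ) := by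
            have htri := dist1_triangle (x : Fin d → ℤ) (x' : Fin d → ℤ) (y : Fin d → ℤ)
            have hmle : m ≤ dist1 (x : Fin d → ℤ) (x' : Fin d → ℤ) + 1 := by
              apply max_le <;> omega
            omega
          have hG' : opNorm (blk G x x') ≤ 2 * r ^ (m - 1) := by
            calc opNorm (blk G x x') ≤
                2 * r ^ (dist1 (x : Fin d → ℤ) (x' : Fin d → ℤ)) := hGblk x x'
              _ ≤ 2 * r ^ (m - 1) := by
                  have := pow_le_pow_of_le_one hr0 hr1 hmd
                  linarith
          have hX : opNorm (blk G x x' * gmm (u ⟨x'.1, hsub x'.2⟩) lam) ≤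
              2 * r ^ (m - 1) * (2 / ε) := by
            calc opNorm (blk G x x' * gmm (u ⟨x'.1, hsub x'.2⟩) lam)
                ≤ opNorm (blk G x x') * opNorm (gmm (u ⟨x'.1, hsub x'.2⟩) lam) :=
                  opNorm_mul_le _ _
              _ ≤ 2 * r ^ (m - 1) * (2 / ε) :=
                  mul_le_mul hG' (hgnorm x') (opNorm_nonneg _) (by positivity)
          calc opNorm (blk G x x' * gmm (u ⟨x'.1, hsub x'.2⟩) lam * (γ • 1))
              ≤ opNorm (blk G x x' * gmm (u ⟨x'.1, hsub x'.2⟩) lam) *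
                opNorm (γ • (1 : Matrix (Fin 2) (Fin 2) ℝ)) := opNorm_mul_le _ _
            _ ≤ (2 * r ^ (m - 1) * (2 / ε)) * γ :=
                mul_le_mul hX hCn (opNorm_nonneg _) (by positivity)
            _ = 2 * r ^ (m - 1) * (2 / ε) * γ := by ring
        · rw [if_neg hdist]
          have hC0 : blk (Cmat d γ Λ Λ' hsub u) x' y = 0 := by
            rw [hCblk, if_neg hdist]
          rw [hC0, Matrix.mul_zero, opNorm_zero]
    _ ≤ (8 * (d:ℝ) * γ / ε) ^ m := by
        have ht : (8 * (d:ℝ) * γ / ε) = 2 * r := by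
          rw [hrdef, hκdef]; push_cast; ring
        have hrt : r ≤ 8 * (d:ℝ) * γ / ε := by rw [ht]; linarith
        have hpm : r ^ (m - 1) ≤ (8 * (d:ℝ) * γ / ε) ^ (m - 1) :=
          pow_le_pow_left₀ hr0 hrt (m - 1)
        have hsucc : (8 * (d:ℝ) * γ / ε) ^ m =
            (8 * (d:ℝ) * γ / ε) ^ (m - 1) * (8 * (d:ℝ) * γ / ε) := by
          rw [← pow_succ]
          congr 1
          omega
        calc ((2 * d : ℕ) : ℝ) * (2 * r ^ (m - 1) * (2 / ε) * γ)
            = (8 * (d:ℝ) * γ / ε) * r ^ (m - 1) := by push_cast; ring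
          _ ≤ (8 * (d:ℝ) * γ / ε) * (8 * (d:ℝ) * γ / ε) ^ (m - 1) :=
              mul_le_mul_of_nonneg_left hpm (by positivity)
          _ = (8 * (d:ℝ) * γ / ε) ^ m := by rw [hsucc]; ring
    _ = (8 * (d:ℝ) * γ / ε) ^ m := rfl
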